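/- For every real B ≥ 1, N*(B) = 2·Σ_{1 ≤ n ≤ B} Σ_{d | n³, n³/B ≤ d ≤ B²} r_{4k}(d)·1_S(n²/d), where n ranges over positive integers and d over positive divisors of n³. -/

import Mathlib

open scoped BigOperators Classical
open Filter Asymptotics

noncomputable section

/-- Value of the multiplicative function `r*_{4k}` at the prime power `p^l`. -/
def rstarPP (k p l : ℕ) : ℝ :=
  if p = 2 ∧ 1 ≤ l then
    (1 - (-1 : ℝ)^k / (1 - 2^(2*k-1))) * 2^(l*(2*k-1))
      - (-1 : ℝ)^k * (1 - 2^(2*k)) / (1 - 2^(2*k-1))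
  else (1 - (p : ℝ)^((l+1)*(2*k-1))) / (1 - (p : ℝ)^(2*k-1))

/-- The multiplicative function `r*_{4k}`, given by its values on prime powers. -/
def rstar (k n : ℕ) : ℝ := n.factorization.prod (fun p l => rstarPP k p l)

/-- The indicator function `1_S` of rationals having no `p`-adic valuation equal to `1`
outside of `S`. -/
def oneS (S : Finset ℕ) (q : ℚ) : ℝ :=
  if ∀ p : ℕ, p.Prime → p ∉ S → padicValRat p q ≠ 1 then 1 else 0

/-- `r_{4k}(d)`: the number of representations of `d` as a sum of `4k` squares. -/
def rquad (k d : ℕ) : ℕ :=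
  Set.ncard {y : Fin (4*k) → ℤ | ∑ i, (y i)^2 = (d : ℤ)}

/-- The divisor sum `S(X,Y)`. -/
def Ssum (k : ℕ) (S : Finset ℕ) (X Y : ℝ) : ℝ :=
  ∑ n ∈ Finset.Icc 1 ⌊X⌋₊, ∑ d ∈ (n^3).divisors.filter (fun d : ℕ => (d : ℝ) ≤ Y),
    rstar k d * oneS S ((n : ℚ)^2 / (d : ℚ))

/-- The divisor sum `T(B)`. -/
def Tsum (k : ℕ) (S : Finset ℕ) (B : ℝ) : ℝ :=
  ∑ n ∈ Finset.Icc 1 ⌊B⌋₊, ∑ d ∈ (n^3).divisors.filter (fun d : ℕ => (d : ℝ) ≤ (n : ℝ)^3 / B),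
    rstar k d * oneS S ((n : ℚ)^2 / (d : ℚ))

/-- `M(X,Y) = ∫₀^X ∫₀^Y S(x,y) dy dx`. -/
def Msum (k : ℕ) (S : Finset ℕ) (X Y : ℝ) : ℝ :=
  ∫ x in (0:ℝ)..X, ∫ y in (0:ℝ)..Y, Ssum k S x y

/-- Second difference `𝒟f(X₁,X₂;Y₁,Y₂)`. -/
def DD (f : ℝ → ℝ → ℝ) (X₁ X₂ Y₁ Y₂ : ℝ) : ℝ :=
  f X₁ Y₁ + f X₂ Y₂ - f X₁ Y₂ - f X₂ Y₁

/-- The counting function `N*(B)` (no coprimality condition). -/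
def Nstar (k : ℕ) (S : Finset ℕ) (B : ℝ) : ℕ :=
  Set.ncard {P : ℤ × (Fin (4*k) → ℤ) × ℤ |
    P.1 ≠ 0 ∧ P.1^3 = (∑ i, (P.2.1 i)^2) * P.2.2 ∧
    max (max |(P.1 : ℝ)| (Real.sqrt (∑ i, ((P.2.1 i : ℝ))^2))) |(P.2.2 : ℝ)| ≤ B ∧
    ∀ p : ℕ, p.Prime → p ∉ S →
      (padicValInt p P.2.2 : ℤ) - (padicValInt p P.1 : ℤ) ≠ 1}

/-- The counting function `N(B)` of semi-integral points. -/
def Ncount (k : ℕ) (S : Finset ℕ) (B : ℝ) : ℕ :=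
  Set.ncard {P : ℤ × (Fin (4*k) → ℤ) × ℤ |
    Int.gcd P.1 ((Int.gcd (Finset.univ.gcd P.2.1) P.2.2 : ℕ) : ℤ) = 1 ∧
    P.1 ≠ 0 ∧ P.1^3 = (∑ i, (P.2.1 i)^2) * P.2.2 ∧
    max (max |(P.1 : ℝ)| (Real.sqrt (∑ i, ((P.2.1 i : ℝ))^2))) |(P.2.2 : ℝ)| ≤ B ∧
    ∀ p : ℕ, p.Prime → p ∉ S →
      (padicValInt p P.2.2 : ℤ) - (padicValInt p P.1 : ℤ) ≠ 1}

/-- The `a`-th term of the local series `F_p(s,w)`. -/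
def FpTerm (k : ℕ) (S : Finset ℕ) (p : ℕ) (s w : ℂ) (a : ℕ) : ℂ :=
  if p ∈ S then
    (p : ℂ)^(-(a : ℂ) * s) *
      ∑ b ∈ Finset.range (3*a+1), (p : ℂ)^(-(b : ℂ) * w) * (rstar k (p^b) : ℂ)
  else
    (p : ℂ)^(-(a : ℂ) * s) *
      ∑ b ∈ (Finset.range (3*a+1)).filter (fun b : ℕ => (b : ℤ) ≠ 2*(a : ℤ) - 1),
        (p : ℂ)^(-(b : ℂ) * w) * (rstar k (p^b) : ℂ)

/-- The local series `F_p(s,w)`. -/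
def Fp (k : ℕ) (S : Finset ℕ) (p : ℕ) (s w : ℂ) : ℂ := ∑' a : ℕ, FpTerm k S p s w a

/-- The local factor `G_p(s,w)`. -/
def Gp (k : ℕ) (S : Finset ℕ) (p : ℕ) (s w : ℂ) : ℂ :=
  (1 - (p : ℂ)^(-s)) * (1 - (p : ℂ)^(-(s + 2*(w - 2*(k : ℂ) + 1)))) *
    (1 - (p : ℂ)^(-(s + 3*(w - 2*(k : ℂ) + 1)))) * Fp k S p s w

/-- The Euler product `G_S(s,w)`. -/
def GS (k : ℕ) (S : Finset ℕ) (s w : ℂ) : ℂ :=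
  ∏' p : Nat.Primes, Gp k S (p : ℕ) s w

/-- The double Dirichlet series `F(s,w)`. -/
def Ffun (k : ℕ) (S : Finset ℕ) (s w : ℂ) : ℂ :=
  ∑' n : ℕ, ∑ d ∈ (n^3).divisors,
    (rstar k d : ℂ) * (oneS S ((n : ℚ)^2 / (d : ℚ)) : ℂ) * (n : ℂ)^(-s) * (d : ℂ)^(-w)

/-- The local series `F_p(1, 2k-1)` (real-valued). -/
def FpOne (k : ℕ) (S : Finset ℕ) (p : ℕ) : ℝ :=
  if p ∈ S then
    ∑' a : ℕ, ((p : ℝ)^a)⁻¹ *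
      ∑ b ∈ Finset.range (3*a+1), ((p : ℝ)^(b*(2*k-1)))⁻¹ * rstar k (p^b)
  else
    ∑' a : ℕ, ((p : ℝ)^a)⁻¹ *
      ∑ b ∈ (Finset.range (3*a+1)).filter (fun b : ℕ => (b : ℤ) ≠ 2*(a : ℤ) - 1),
        ((p : ℝ)^(b*(2*k-1)))⁻¹ * rstar k (p^b)

/-- The constant `𝔠 = ∏_p (1-1/p)³ F_p(1,2k-1)`. -/
def cConst (k : ℕ) (S : Finset ℕ) : ℝ :=
  ∏' p : Nat.Primes, (1 - ((p : ℕ) : ℝ)⁻¹)^3 * FpOne k S (p : ℕ)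

namespace NstarAux

lemma abs_le_sq (a : ℤ) : |a| ≤ a ^ 2 := by
  rcases eq_or_ne a 0 with rfl | h
  · simp
  · nlinarith [abs_nonneg a, sq_abs a, Int.one_le_abs h]

def YF (m d : ℕ) : Finset (Fin m → ℤ) :=
  (Fintype.piFinset (fun _ => Finset.Icc (-(d:ℤ)) (d:ℤ))).filter
    (fun y => ∑ i, (y i)^2 = (d:ℤ))

lemma mem_YF {m d : ℕ} {y : Fin m → ℤ} : y ∈ YF m d ↔ ∑ i, (y i)^2 = (d:ℤ) := by
  constructor
  · exact fun h => (Finset.mem_filter.1 h).2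
  · intro h
    refine Finset.mem_filter.2 ⟨Fintype.mem_piFinset.2 fun i => ?_, h⟩
    have h1 : (y i)^2 ≤ (d:ℤ) := by
      rw [← h]
      exact Finset.single_le_sum (fun j _ => sq_nonneg (y j)) (Finset.mem_univ i)
    have h2 := (abs_le_sq (y i)).trans h1
    rw [Finset.mem_Icc]
    exact ⟨(abs_le.1 h2).1, (abs_le.1 h2).2⟩

lemma val_key {p n d : ℕ} (hp : p.Prime) (hn : n ≠ 0) (hd : d ∣ n^3) (hd0 : d ≠ 0) :
    (padicValNat p (n^3 / d) : ℤ) - (padicValNat p n : ℤ)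
      = padicValRat p ((n:ℚ)^2 / (d:ℚ)) := by
  haveI : Fact p.Prime := ⟨hp⟩
  have h3 : n^3 ≠ 0 := pow_ne_zero _ hn
  have hq : n^3 / d ≠ 0 := by
    intro h
    apply h3
    rw [← Nat.div_mul_cancel hd, h, zero_mul]
  have hmul : padicValNat p (n^3/d) + padicValNat p d = 3 * padicValNat p n := by
    rw [← padicValNat.mul hq hd0, Nat.div_mul_cancel hd, padicValNat.pow _ _]
  have hrat : padicValRat p ((n:ℚ)^2 / (d:ℚ))
      = 2 * (padicValNat p n : ℤ) - (padicValNat p d : ℤ) := by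
    rw [padicValRat.div (pow_ne_zero _ (Nat.cast_ne_zero.2 hn)) (Nat.cast_ne_zero.2 hd0),
      padicValRat.pow _, padicValRat.of_nat, padicValRat.of_nat]
    push_cast
    ring
  rw [hrat]
  omega

end NstarAux

/-- The condition appearing in `oneS` specialised to `n^2/d`. -/
def condP (S : Finset ℕ) (n d : ℕ) : Prop :=
  ∀ p : ℕ, p.Prime → p ∉ S → padicValRat p ((n:ℚ)^2 / (d:ℚ)) ≠ 1

lemma oneS_eq (S : Finset ℕ) (n d : ℕ) :
    oneS S ((n:ℚ)^2/(d:ℚ)) = if condP S n d then 1 else 0 := by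
  unfold oneS condP
  congr

lemma rquad_eq_card (k d : ℕ) : rquad k d = (NstarAux.YF (4*k) d).card := by
  have h : {y : Fin (4*k) → ℤ | ∑ i, (y i)^2 = (d:ℤ)} = ↑(NstarAux.YF (4*k) d) := by
    ext y
    simp [NstarAux.mem_YF]
  rw [rquad, h, Set.ncard_coe_finset]


/-- `N*(B) = 2·Σ_{1 ≤ n ≤ B} Σ_{d ∣ n³, n³/B ≤ d ≤ B²} r_{4k}(d)·1_S(n²/d)`. -/
theorem Nstar_eq_double_sum (k : ℕ) (hk : 0 < k) (S : Finset ℕ) (hS : ∀ p ∈ S, p.Prime)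
    (B : ℝ) (hB : 1 ≤ B) :
    (Nstar k S B : ℝ) =
      2 * ∑ n ∈ Finset.Icc 1 ⌊B⌋₊,
        ∑ d ∈ (n^3).divisors.filter (fun d : ℕ => (n : ℝ)^3 / B ≤ (d : ℝ) ∧ (d : ℝ) ≤ B^2),
          (rquad k d : ℝ) * oneS S ((n : ℚ)^2 / (d : ℚ)) := by
  
  classical
  have hB0 : (0:ℝ) < B := lt_of_lt_of_le one_pos hB
  set A : Set (ℤ × (Fin (4*k) → ℤ) × ℤ) := {P : ℤ × (Fin (4*k) → ℤ) × ℤ |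
    P.1 ≠ 0 ∧ P.1^3 = (∑ i, (P.2.1 i)^2) * P.2.2 ∧
    max (max |(P.1 : ℝ)| (Real.sqrt (∑ i, ((P.2.1 i : ℝ))^2))) |(P.2.2 : ℝ)| ≤ B ∧
    ∀ p : ℕ, p.Prime → p ∉ S →
      (padicValInt p P.2.2 : ℤ) - (padicValInt p P.1 : ℤ) ≠ 1} with hA
  -- basic facts about elements of `A`
  have hPfacts : ∀ P : ℤ × (Fin (4*k) → ℤ) × ℤ, P ∈ A →
      1 ≤ P.1.natAbs ∧ P.1.natAbs ≤ ⌊B⌋₊ ∧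
      1 ≤ (∑ i, (P.2.1 i)^2).toNat ∧ (∑ i, (P.2.1 i)^2).toNat ≤ ⌊B^2⌋₊ ∧
      ((((∑ i, (P.2.1 i)^2).toNat : ℕ)) : ℝ) ≤ B^2 ∧
      (∑ i, (P.2.1 i)^2).toNat ∣ P.1.natAbs^3 ∧
      P.2.2.natAbs = P.1.natAbs^3 / (∑ i, (P.2.1 i)^2).toNat ∧
      (P.1.natAbs:ℝ)^3 / B ≤ (((∑ i, (P.2.1 i)^2).toNat : ℕ) : ℝ) ∧
      P.2.2.natAbs ≤ ⌊B⌋₊ ∧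
      (∑ i, (P.2.1 i)^2) = (((∑ i, (P.2.1 i)^2).toNat : ℕ) : ℤ) := by
    rintro ⟨x, y, z⟩ ⟨hx0, heq, hb, hval⟩
    dsimp only at hx0 heq hb hval ⊢
    obtain ⟨h12, hbz⟩ := max_le_iff.mp hb
    obtain ⟨hbx, hby⟩ := max_le_iff.mp h12
    have hD0 : 0 ≤ ∑ i, (y i)^2 := Finset.sum_nonneg fun _ _ => sq_nonneg _
    set D : ℤ := ∑ i, (y i)^2 with hD
    set d : ℕ := D.toNat with hdd
    have hDd : (d:ℤ) = D := Int.toNat_of_nonneg hD0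
    have hsum : (D:ℝ) = ∑ i, ((y i : ℝ))^2 := by
      rw [hD]
      push_cast
      rfl
    have hsumnn : (0:ℝ) ≤ ∑ i, ((y i : ℝ))^2 := Finset.sum_nonneg fun _ _ => sq_nonneg _
    have hsq := Real.sq_sqrt hsumnn
    have hDB : (D:ℝ) ≤ B^2 := by
      nlinarith [Real.sqrt_nonneg (∑ i, ((y i : ℝ))^2)]
    have hDne : D ≠ 0 := by
      intro h
      apply hx0
      have hx3 : x^3 = 0 := by rw [heq, h, zero_mul]
      exact pow_eq_zero_iff (by norm_num) |>.1 hx3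
    have hdne : d ≠ 0 := by
      intro h
      apply hDne
      rw [← hDd, h]
      rfl
    have hd1 : 1 ≤ d := by omega
    have hn1 : 1 ≤ x.natAbs := Int.natAbs_pos.2 hx0
    have hnB : x.natAbs ≤ ⌊B⌋₊ := Nat.le_floor (by rw [Nat.cast_natAbs]; push_cast; exact hbx)
    have hdR : (d:ℝ) ≤ B^2 := by
      have : ((d:ℕ):ℝ) = ((D:ℤ):ℝ) := by exact_mod_cast congrArg (fun t : ℤ => (t:ℝ)) hDd
      rw [this]
      exact hDB
    have hdB2 : d ≤ ⌊B^2⌋₊ := Nat.le_floor hdR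
    have habs : x.natAbs^3 = d * z.natAbs := by
      have h := congrArg Int.natAbs heq
      rw [← hDd] at h
      simpa [Int.natAbs_pow, Int.natAbs_mul] using h
    have hdvd : d ∣ x.natAbs^3 := ⟨z.natAbs, habs⟩
    have hz : z.natAbs = x.natAbs^3 / d := by
      rw [habs, Nat.mul_div_cancel_left _ (show 0 < d by omega)]
    have hzB : z.natAbs ≤ ⌊B⌋₊ := Nat.le_floor (by rw [Nat.cast_natAbs]; push_cast; exact hbz)
    have hlow : (x.natAbs:ℝ)^3 / B ≤ (d:ℝ) := by
      rw [div_le_iff₀ hB0]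
      have hcast : ((x.natAbs:ℕ):ℝ)^3 = (d:ℝ) * (z.natAbs:ℝ) := by exact_mod_cast habs
      have hzB' : ((z.natAbs:ℕ):ℝ) ≤ B := by rw [Nat.cast_natAbs]; push_cast; exact hbz
      calc ((x.natAbs:ℕ):ℝ)^3 = (d:ℝ) * (z.natAbs:ℝ) := hcast
        _ ≤ (d:ℝ) * B := mul_le_mul_of_nonneg_left hzB' (Nat.cast_nonneg d)
    exact ⟨hn1, hnB, hd1, hdB2, hdR, hdvd, hz, hlow, hzB, hDd.symm⟩
  -- the finite box
  set F : Finset (ℤ × (Fin (4*k) → ℤ) × ℤ) :=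
    ((Finset.Icc (-(⌊B⌋₊:ℤ)) (⌊B⌋₊:ℤ)) ×ˢ
      (Fintype.piFinset fun _ : Fin (4*k) => Finset.Icc (-(⌊B^2⌋₊:ℤ)) (⌊B^2⌋₊:ℤ)) ×ˢ
      (Finset.Icc (-(⌊B⌋₊:ℤ)) (⌊B⌋₊:ℤ))).filter (fun P => P ∈ A) with hF
  have hFA : ∀ P, P ∈ F ↔ P ∈ A := by
    intro P
    constructor
    · exact fun h => (Finset.mem_filter.1 h).2
    · intro hPA
      obtain ⟨h1, h2, h3, h4, h5, h6, h7, h8, h9, h10⟩ := hPfacts P hPA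
      refine Finset.mem_filter.2 ⟨?_, hPA⟩
      refine Finset.mem_product.2 ⟨?_, Finset.mem_product.2 ⟨?_, ?_⟩⟩
      · rw [Finset.mem_Icc, ← abs_le, Int.abs_eq_natAbs]
        exact_mod_cast h2
      · refine Fintype.mem_piFinset.2 fun i => ?_
        rw [Finset.mem_Icc, ← abs_le]
        have hle : (P.2.1 i)^2 ≤ ∑ j, (P.2.1 j)^2 :=
          Finset.single_le_sum (fun j _ => sq_nonneg (P.2.1 j)) (Finset.mem_univ i)
        have := (NstarAux.abs_le_sq (P.2.1 i)).trans hle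
        rw [h10] at this
        exact this.trans (by exact_mod_cast h4)
      · rw [Finset.mem_Icc, ← abs_le, Int.abs_eq_natAbs]
        exact_mod_cast h9
  have hAF : A = ↑F := Set.ext fun P => by rw [Finset.mem_coe, hFA]
  have hNF : Nstar k S B = F.card := by
    have h1 : Nstar k S B = A.ncard := by rw [Nstar, hA]
    rw [h1, hAF, Set.ncard_coe_finset]
  -- fiber decomposition
  set f : ℤ × (Fin (4*k) → ℤ) × ℤ → ℕ × ℕ :=
    fun P => (P.1.natAbs, (∑ i, (P.2.1 i)^2).toNat) with hf
  set I : Finset (ℕ × ℕ) :=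
    ((Finset.Icc 1 ⌊B⌋₊) ×ˢ (Finset.Icc 1 ⌊B^2⌋₊)).filter
      (fun q => q.2 ∣ q.1^3 ∧ (q.1:ℝ)^3 / B ≤ (q.2:ℝ) ∧ (q.2:ℝ) ≤ B^2) with hI
  have hmap : ∀ P ∈ F, f P ∈ I := by
    intro P hP
    obtain ⟨h1, h2, h3, h4, h5, h6, h7, h8, h9, h10⟩ := hPfacts P ((hFA P).1 hP)
    exact Finset.mem_filter.2 ⟨Finset.mem_product.2
      ⟨Finset.mem_Icc.2 ⟨h1, h2⟩, Finset.mem_Icc.2 ⟨h3, h4⟩⟩, h6, h8, h5⟩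
  have hcard : F.card = ∑ q ∈ I, (F.filter fun P => f P = q).card :=
    Finset.card_eq_sum_card_fiberwise hmap
  -- count each fiber
  have hfiber : ∀ q ∈ I, (F.filter fun P => f P = q).card
      = 2 * (NstarAux.YF (4*k) q.2).card * (if condP S q.1 q.2 then 1 else 0) := by
    rintro ⟨n, d⟩ hq
    obtain ⟨hmem, hdvd, hlo, hhi⟩ := Finset.mem_filter.1 hq
    obtain ⟨hnI, hdI⟩ := Finset.mem_product.1 hmem
    obtain ⟨hn1, hnB⟩ := Finset.mem_Icc.1 hnI
    obtain ⟨hd1, hdB⟩ := Finset.mem_Icc.1 hdI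
    set e : ℕ := n^3 / d with he
    have hde : d * e = n^3 := Nat.mul_div_cancel' hdvd
    have hde' : (d:ℤ) * (e:ℤ) = (n:ℤ)^3 := by exact_mod_cast hde
    have hfib : ∀ P ∈ F.filter fun P => f P = (n,d),
        P.1.natAbs = n ∧ (∑ i, (P.2.1 i)^2) = (d:ℤ) ∧ P.1^3 = (d:ℤ) * P.2.2 ∧
        P.2.2.natAbs = e ∧ P.1 ≠ 0 := by
      intro P hP
      obtain ⟨hPF, hPfq⟩ := Finset.mem_filter.1 hP
      have hPA := (hFA P).1 hPF
      obtain ⟨_, _, _, _, _, _, h7, _, _, h10⟩ := hPfacts P hPA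
      have hxn : P.1.natAbs = n := congrArg Prod.fst hPfq
      have hdn : (∑ i, (P.2.1 i)^2).toNat = d := congrArg Prod.snd hPfq
      refine ⟨hxn, by rw [h10, hdn], ?_, by rw [h7, hxn, hdn], hPA.1⟩
      have := hPA.2.1
      rw [h10, hdn] at this
      exact this
    by_cases hc : condP S n d
    · rw [if_pos hc, mul_one]
      have hcardeq : 2 * (NstarAux.YF (4*k) d).card
          = (({-1, 1} : Finset ℤ) ×ˢ NstarAux.YF (4*k) d).card := by
        rw [Finset.card_product]
        norm_num
      rw [hcardeq]
      refine Finset.card_nbij' (fun P => (Int.sign P.1, P.2.1))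
        (fun q => (q.1 * (n:ℤ), q.2, q.1 * (e:ℤ))) ?_ ?_ ?_ ?_
      · -- forward membership
        intro P hP
        obtain ⟨hxn, hyd, heq, hze, hx0⟩ := hfib P hP
        refine Finset.mem_product.2 ⟨?_, NstarAux.mem_YF.2 hyd⟩
        rcases Int.natAbs_eq P.1 with hx | hx <;> rw [hxn] at hx
        · have : Int.sign P.1 = 1 := Int.sign_eq_one_iff_pos.2
            (by rw [hx]; exact_mod_cast Nat.pos_of_ne_zero (by omega))
          simp [this]
        · have : Int.sign P.1 = -1 := Int.sign_eq_neg_one_iff_neg.2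
            (by rw [hx]; simp; exact_mod_cast Nat.pos_of_ne_zero (by omega))
          simp [this]
      · -- backward membership
        rintro ⟨s, y⟩ hq'
        obtain ⟨hs, hy⟩ := Finset.mem_product.1 hq'
        have hs' : s = -1 ∨ s = 1 := by simpa using hs
        have hyd : ∑ i, (y i)^2 = (d:ℤ) := NstarAux.mem_YF.1 hy
        have hsne : s ≠ 0 := by rcases hs' with rfl | rfl <;> norm_num
        have hs3 : s^3 = s := by rcases hs' with rfl | rfl <;> norm_num
        have hnz : (n:ℤ) ≠ 0 := Int.natCast_ne_zero.2 (by omega)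
        have hdz : (d:ℤ) ≠ 0 := Int.natCast_ne_zero.2 (by omega)
        have hnR : ((n:ℕ):ℝ) ≤ B := le_trans (by exact_mod_cast Nat.cast_le.2 hnB)
          (Nat.floor_le hB0.le)
        have hPA : (s * (n:ℤ), y, s * (e:ℤ)) ∈ A := by
          rw [hA]
          refine ⟨mul_ne_zero hsne hnz, ?_, ?_, ?_⟩
          · show (s * (n:ℤ))^3 = (∑ i, (y i)^2) * (s * (e:ℤ))
            rw [hyd]
            calc (s * (n:ℤ))^3 = s^3 * (n:ℤ)^3 := by ring
              _ = s * ((d:ℤ) * (e:ℤ)) := by rw [hs3, hde']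
              _ = (d:ℤ) * (s * (e:ℤ)) := by ring
          · show max (max |((s * (n:ℤ) : ℤ):ℝ)| (Real.sqrt (∑ i, ((y i : ℝ))^2)))
              |((s * (e:ℤ) : ℤ):ℝ)| ≤ B
            have hyR : ∑ i, ((y i : ℝ))^2 = (d:ℝ) := by
              have h := congrArg (fun t : ℤ => (t:ℝ)) hyd
              push_cast at h
              exact h
            have hsabs : |(s:ℝ)| = 1 := by rcases hs' with rfl | rfl <;> norm_num
            have heB : ((e:ℕ):ℝ) ≤ B := by
              have hdpos : (0:ℝ) < (d:ℕ) := by exact_mod_cast Nat.pos_of_ne_zero (by omega)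
              have h1 : ((n:ℕ):ℝ)^3 ≤ (d:ℝ) * B := (div_le_iff₀ hB0).1 hlo
              have h2 : ((d:ℕ):ℝ) * ((e:ℕ):ℝ) = ((n:ℕ):ℝ)^3 := by exact_mod_cast hde
              nlinarith
            refine max_le (max_le ?_ ?_) ?_
            · push_cast
              rw [abs_mul, hsabs, one_mul, abs_of_nonneg (by positivity : (0:ℝ) ≤ ((n:ℕ):ℝ))]
              exact hnR
            · rw [hyR]
              calc Real.sqrt (d:ℝ) ≤ Real.sqrt (B^2) := Real.sqrt_le_sqrt hhi
                _ = B := Real.sqrt_sq hB0.le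
            · push_cast
              rw [abs_mul, hsabs, one_mul, abs_of_nonneg (by positivity : (0:ℝ) ≤ ((e:ℕ):ℝ))]
              exact heB
          · show ∀ p : ℕ, p.Prime → p ∉ S →
              (padicValInt p (s * (e:ℤ)) : ℤ) - (padicValInt p (s * (n:ℤ)) : ℤ) ≠ 1
            intro p hp hpS
            have hza : (s * (e:ℤ)).natAbs = e := by rcases hs' with rfl | rfl <;> simp
            have hxa : (s * (n:ℤ)).natAbs = n := by rcases hs' with rfl | rfl <;> simp
            simp only [padicValInt, hza, hxa]
            have hv := NstarAux.val_key hp (show n ≠ 0 by omega) hdvd (show d ≠ 0 by omega)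
            rw [← he] at hv
            rw [hv]
            exact hc p hp hpS
        refine Finset.mem_filter.2 ⟨(hFA _).2 hPA, ?_⟩
        rw [hf]
        have hxa : (s * (n:ℤ)).natAbs = n := by rcases hs' with rfl | rfl <;> simp
        have hda : (∑ i, (y i)^2).toNat = d := by rw [hyd]; simp
        simp only [hxa, hda]
      · -- left inverse
        intro P hP
        obtain ⟨hxn, hyd, heq, hze, hx0⟩ := hfib P hP
        have hdz : (d:ℤ) ≠ 0 := Int.natCast_ne_zero.2 (by omega)
        have hnpos : (0:ℤ) < (n:ℤ) := by exact_mod_cast Nat.pos_of_ne_zero (by omega)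
        dsimp only
        simp only [Prod.ext_iff]
        rcases Int.natAbs_eq P.1 with hx | hx <;> rw [hxn] at hx
        · have hsgn : Int.sign P.1 = 1 := Int.sign_eq_one_iff_pos.2 (by rw [hx]; exact hnpos)
          have hzv : P.2.2 = (e:ℤ) := by
            apply mul_left_cancel₀ hdz
            rw [← heq, hx, ← hde']
          refine ⟨?_, trivial, ?_⟩
          · rw [hsgn, one_mul]
            exact hx.symm
          · rw [hsgn, one_mul]
            exact hzv.symm
        · have hsgn : Int.sign P.1 = -1 := Int.sign_eq_neg_one_iff_neg.2
            (by rw [hx]; exact neg_neg_of_pos hnpos)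
          have hzv : P.2.2 = -(e:ℤ) := by
            apply mul_left_cancel₀ hdz
            rw [← heq, hx]
            rw [show (-(n:ℤ))^3 = -((n:ℤ)^3) by ring, ← hde']
            ring
          refine ⟨?_, trivial, ?_⟩
          · rw [hsgn]
            rw [hx]
            ring
          · rw [hsgn, hzv]
            ring
      · -- right inverse
        rintro ⟨s, y⟩ hq'
        obtain ⟨hs, hy⟩ := Finset.mem_product.1 hq'
        have hs' : s = -1 ∨ s = 1 := by simpa using hs
        have hnpos : (0:ℤ) < (n:ℤ) := by exact_mod_cast Nat.pos_of_ne_zero (by omega)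
        dsimp only
        rcases hs' with rfl | rfl <;>
          simp [Prod.ext_iff, Int.sign_eq_one_iff_pos.2 hnpos]
    · rw [if_neg hc, mul_zero]
      rw [Finset.card_eq_zero, Finset.filter_eq_empty_iff]
      intro P hP hfq
      obtain ⟨hxn, hyd, heq, hze, hx0⟩ := hfib P (Finset.mem_filter.2 ⟨hP, hfq⟩)
      rw [condP] at hc
      push_neg at hc
      obtain ⟨p, hp, hpS, hpv⟩ := hc
      have hPA := (hFA P).1 hP
      have hval := hPA.2.2.2 p hp hpS
      apply hval
      simp only [padicValInt, hze, hxn]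
      have hv := NstarAux.val_key hp (show n ≠ 0 by omega) hdvd (show d ≠ 0 by omega)
      rw [← he] at hv
      rw [hv]
      exact hpv
  -- assemble
  have h1 : F.card = ∑ q ∈ I, 2 * (NstarAux.YF (4*k) q.2).card
      * (if condP S q.1 q.2 then 1 else 0) := by
    rw [hcard]
    exact Finset.sum_congr rfl hfiber
  have h2 : (F.card : ℝ) = ∑ q ∈ I, 2 * ((NstarAux.YF (4*k) q.2).card : ℝ)
      * (if condP S q.1 q.2 then (1:ℝ) else 0) := by
    rw [h1]
    push_cast
    rfl
  have h3 : ∑ q ∈ I, 2 * ((NstarAux.YF (4*k) q.2).card : ℝ)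
        * (if condP S q.1 q.2 then (1:ℝ) else 0)
      = ∑ n ∈ Finset.Icc 1 ⌊B⌋₊,
          ∑ d ∈ (n^3).divisors.filter (fun d : ℕ => (n : ℝ)^3 / B ≤ (d : ℝ) ∧ (d : ℝ) ≤ B^2),
            2 * ((NstarAux.YF (4*k) d).card : ℝ) * (if condP S n d then (1:ℝ) else 0) := by
    rw [hI, Finset.sum_filter, Finset.sum_product]
    refine Finset.sum_congr rfl fun n hn => ?_
    rw [← Finset.sum_filter]
    obtain ⟨hn1, hnB⟩ := Finset.mem_Icc.1 hn
    refine Finset.sum_congr ?_ fun d _ => rfl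
    ext d
    simp only [Finset.mem_filter, Finset.mem_Icc, Nat.mem_divisors]
    constructor
    · rintro ⟨⟨hd1, hd2⟩, h3, h4, h5⟩
      exact ⟨⟨h3, pow_ne_zero _ (by omega)⟩, h4, h5⟩
    · rintro ⟨⟨h3, _⟩, h4, h5⟩
      have hd1 : 1 ≤ d := Nat.pos_of_dvd_of_pos h3 (by positivity)
      exact ⟨⟨hd1, Nat.le_floor h5⟩, h3, h4, h5⟩
  rw [hNF, h2, h3, Finset.mul_sum]
  refine Finset.sum_congr rfl fun n hn => ?_
  rw [Finset.mul_sum]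
  refine Finset.sum_congr rfl fun d hd => ?_
  rw [rquad_eq_card, oneS_eq]
  ring
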